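/- Let Z_1, ..., Z_{n+1} be exchangeable real-valued random variables (ties allowed) and let τ be uniform on (0,1) independent of them. Define F_{n+1}(t) = (1/(n+1)) Σ_{i=1}^{n+1} 1{Z_i ≤ t} and F_{n+1}^-(t) = (1/(n+1)) Σ_{i=1}^{n+1} 1{Z_i < t}. Then the randomized probability integral transform U = (1-τ) F_{n+1}^-(Z_{n+1}) + τ F_{n+1}(Z_{n+1}) is uniformly distributed on (0,1). -/

import Mathlib

open MeasureTheory Finset
open scoped ENNReal

section PITAux

lemma pit_meas_cardlt {m : ℕ} (j : Fin m) :
    Measurable (fun z : Fin m → ℝ => ((univ.filter (fun i => z i < z j)).card : ℝ)) := by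
  have h : (fun z : Fin m → ℝ => ((univ.filter (fun i => z i < z j)).card : ℝ))
      = fun z => ∑ i : Fin m, if z i < z j then (1:ℝ) else 0 := by
    funext z; rw [Finset.card_filter]; push_cast; rfl
  rw [h]
  exact Finset.measurable_sum _ fun i _ =>
    Measurable.ite (measurableSet_lt (measurable_pi_apply i) (measurable_pi_apply j))
      measurable_const measurable_const

lemma pit_meas_cardle {m : ℕ} (j : Fin m) :
    Measurable (fun z : Fin m → ℝ => ((univ.filter (fun i => z i ≤ z j)).card : ℝ)) := by
  have h : (fun z : Fin m → ℝ => ((univ.filter (fun i => z i ≤ z j)).card : ℝ))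
      = fun z => ∑ i : Fin m, if z i ≤ z j then (1:ℝ) else 0 := by
    funext z; rw [Finset.card_filter]; push_cast; rfl
  rw [h]
  exact Finset.measurable_sum _ fun i _ =>
    Measurable.ite (measurableSet_le (measurable_pi_apply i) (measurable_pi_apply j))
      measurable_const measurable_const

lemma pit_vol_Iic_inter (c : ℝ) :
    volume (Set.Iic c ∩ Set.Ioo (0:ℝ) 1) = ENNReal.ofReal (min c 1) := by
  rcases le_or_gt 1 c with h | h
  · have hs : Set.Iic c ∩ Set.Ioo (0:ℝ) 1 = Set.Ioo 0 1 := by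
      ext x
      simp only [Set.mem_inter_iff, Set.mem_Iic, Set.mem_Ioo]
      exact ⟨fun h2 => h2.2, fun h2 => ⟨h2.2.le.trans h, h2⟩⟩
    rw [hs, Real.volume_Ioo, min_eq_right h]
    norm_num
  · have hs : Set.Iic c ∩ Set.Ioo (0:ℝ) 1 = Set.Ioc 0 c := by
      ext x
      simp only [Set.mem_inter_iff, Set.mem_Iic, Set.mem_Ioo, Set.mem_Ioc]
      exact ⟨fun h2 => ⟨h2.2.1, h2.1⟩, fun h2 => ⟨h2.2, h2.1, lt_of_le_of_lt h2.2 h⟩⟩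
    rw [hs, Real.volume_Ioc, min_eq_left h.le]
    norm_num

lemma pit_card_filter_perm {m : ℕ} (σ : Equiv.Perm (Fin m)) (p : Fin m → Prop) [DecidablePred p] :
    (univ.filter (fun i => p (σ i))).card = (univ.filter p).card := by
  rw [← Finset.card_image_of_injective (univ.filter (fun i => p (σ i))) σ.injective]
  congr 1
  ext x
  simp only [Finset.mem_image, Finset.mem_filter, Finset.mem_univ, true_and]
  constructor
  · rintro ⟨i, hp, rfl⟩; exact hp
  · intro hp; exact ⟨σ.symm x, by simpa using hp, by simp⟩

lemma pit_clamp_eq (a b x : ℝ) (ha : 0 ≤ a) (hb : 0 < b) :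
    max 0 (min ((x - a)/b) 1) = (min (max x 0) (a+b) - min (max x 0) a)/b := by
  rcases le_total x a with h | h
  · have hx0 : max x 0 ≤ a := max_le h ha
    rw [min_eq_left (hx0.trans (by linarith)), min_eq_left hx0, sub_self, zero_div]
    have : (x - a)/b ≤ 0 := div_nonpos_of_nonpos_of_nonneg (by linarith) hb.le
    exact max_eq_left ((min_le_left _ _).trans this)
  · have hx : max x 0 = x := max_eq_left (ha.trans h)
    rcases le_total x (a+b) with h2 | h2
    · rw [hx, min_eq_left h2, min_eq_right h]
      have h3 : (x - a)/b ≤ 1 := by rw [div_le_one hb]; linarith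
      rw [min_eq_left h3]
      exact max_eq_right (div_nonneg (by linarith) hb.le)
    · rw [hx, min_eq_right h2, min_eq_right h]
      have h3 : (1:ℝ) ≤ (x - a)/b := by rw [le_div_iff₀ hb]; linarith
      rw [min_eq_right h3, add_sub_cancel_left, div_self hb.ne']
      exact max_eq_right zero_le_one

lemma pit_tele (F B : ℝ → ℝ) (S : Finset ℝ) :
    ∑ v ∈ S, (F ((∑ w ∈ S.filter (· < v), B w) + B v) - F (∑ w ∈ S.filter (· < v), B w))
      = F (∑ w ∈ S, B w) - F 0 := by
  induction S using Finset.induction_on_max with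
  | empty => simp
  | insert a s hmax ih =>
    have hns : a ∉ s := fun h => lt_irrefl a (hmax a h)
    have hfa : (insert a s).filter (· < a) = s := by
      ext x
      simp only [Finset.mem_filter, Finset.mem_insert]
      constructor
      · rintro ⟨(rfl | hx), hlt⟩
        · exact absurd hlt (lt_irrefl _)
        · exact hx
      · intro hx; exact ⟨Or.inr hx, hmax x hx⟩
    have hfv : ∀ v ∈ s, (insert a s).filter (· < v) = s.filter (· < v) := by
      intro v hv; ext x
      simp only [Finset.mem_filter, Finset.mem_insert]
      constructor
      · rintro ⟨(rfl | hx), hlt⟩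
        · exact absurd (hlt.trans (hmax v hv)) (lt_irrefl _)
        · exact ⟨hx, hlt⟩
      · rintro ⟨hx, hlt⟩; exact ⟨Or.inr hx, hlt⟩
    rw [Finset.sum_insert hns, hfa]
    have hcongr : ∑ v ∈ s, (F ((∑ w ∈ (insert a s).filter (· < v), B w) + B v)
          - F (∑ w ∈ (insert a s).filter (· < v), B w))
        = ∑ v ∈ s, (F ((∑ w ∈ s.filter (· < v), B w) + B v) - F (∑ w ∈ s.filter (· < v), B w)) :=
      Finset.sum_congr rfl fun v hv => by rw [hfv v hv]
    rw [hcongr, ih, Finset.sum_insert hns, add_comm (B a) (∑ w ∈ s, B w)]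
    ring

lemma pit_card_split {m : ℕ} (z : Fin m → ℝ) (v : ℝ) :
    ((univ.filter (fun i => z i ≤ v)).card : ℝ)
      = ((univ.filter (fun i => z i < v)).card : ℝ)
        + ((univ.filter (fun i => z i = v)).card : ℝ) := by
  classical
  have hsplit : (univ.filter (fun i => z i ≤ v))
      = (univ.filter (fun i => z i < v)) ∪ (univ.filter (fun i => z i = v)) := by
    ext i
    simp only [Finset.mem_filter, Finset.mem_univ, true_and, Finset.mem_union]
    exact ⟨fun h => h.lt_or_eq.imp id id, fun h => h.elim le_of_lt le_of_eq⟩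
  have hdisj : Disjoint (univ.filter (fun i => z i < v)) (univ.filter (fun i => z i = v)) := by
    rw [Finset.disjoint_left]
    intro i h1 h2
    simp only [Finset.mem_filter] at h1 h2
    exact absurd h2.2 h1.2.ne
  rw [hsplit, Finset.card_union_of_disjoint hdisj]
  push_cast; ring

lemma pit_card_eq_pos {m : ℕ} (z : Fin m → ℝ) (j : Fin m) :
    (0:ℝ) < ((univ.filter (fun i => z i = z j)).card : ℝ) := by
  have hj : j ∈ univ.filter (fun i => z i = z j) := by simp
  exact_mod_cast Finset.card_pos.2 ⟨j, hj⟩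

lemma pit_comb {m : ℕ} (z : Fin (m+1) → ℝ) (x' : ℝ) (hx' : 0 ≤ x') :
    ∑ j : Fin (m+1),
      (min x' ((univ.filter (fun i => z i ≤ z j)).card : ℝ)
        - min x' ((univ.filter (fun i => z i < z j)).card : ℝ))
        / ((univ.filter (fun i => z i = z j)).card : ℝ)
      = min x' (m+1) := by
  classical
  set A : ℝ → ℝ := fun v => ((univ.filter (fun i => z i < v)).card : ℝ) with hA
  set Bc : ℝ → ℝ := fun v => ((univ.filter (fun i => z i = v)).card : ℝ) with hBc
  set C : ℝ → ℝ := fun v => ((univ.filter (fun i => z i ≤ v)).card : ℝ) with hC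
  set S : Finset ℝ := univ.image z with hS
  have hstep : ∑ j : Fin (m+1),
      (min x' ((univ.filter (fun i => z i ≤ z j)).card : ℝ)
        - min x' ((univ.filter (fun i => z i < z j)).card : ℝ))
        / ((univ.filter (fun i => z i = z j)).card : ℝ)
      = ∑ j : Fin (m+1), (fun v => (min x' (C v) - min x' (A v)) / Bc v) (z j) := rfl
  rw [hstep, Finset.sum_comp (fun v => (min x' (C v) - min x' (A v)) / Bc v) z]
  have hBcpos : ∀ v ∈ S, 0 < Bc v := by
    intro v hv
    rw [hS, Finset.mem_image] at hv
    obtain ⟨i, _, rfl⟩ := hv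
    exact pit_card_eq_pos z i
  have hCeq : ∀ v, C v = A v + Bc v := fun v => pit_card_split z v
  have hAeq : ∀ v, A v = ∑ w ∈ S.filter (· < v), Bc w := by
    intro v
    have hcard : (univ.filter (fun i => z i < v)).card
        = ∑ w ∈ S.filter (· < v),
            ((univ.filter (fun i => z i < v)).filter (fun i => z i = w)).card := by
      apply Finset.card_eq_sum_card_fiberwise
      intro i hi
      simp only [Finset.mem_coe, Finset.mem_filter, Finset.mem_univ, true_and] at hi
      simp only [Finset.mem_coe, Finset.mem_filter, hS, Finset.mem_image]
      exact ⟨⟨i, Finset.mem_univ i, rfl⟩, hi⟩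
    have hfib : ∀ w ∈ S.filter (· < v),
        ((univ.filter (fun i => z i < v)).filter (fun i => z i = w))
          = univ.filter (fun i => z i = w) := by
      intro w hw
      rw [Finset.mem_filter] at hw
      ext i
      simp only [Finset.mem_filter, Finset.mem_univ, true_and]
      exact ⟨fun h => h.2, fun h => ⟨by rw [h]; exact hw.2, h⟩⟩
    rw [hA]
    simp only
    rw [hcard, Nat.cast_sum]
    exact Finset.sum_congr rfl fun w hw => by rw [hfib w hw, hBc]
  have htot : ∑ w ∈ S, Bc w = (m+1 : ℝ) := by
    have hcard : (univ : Finset (Fin (m+1))).card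
        = ∑ w ∈ S, ((univ : Finset (Fin (m+1))).filter (fun i => z i = w)).card := by
      apply Finset.card_eq_sum_card_fiberwise
      intro i _
      rw [hS, Finset.mem_coe, Finset.mem_image]
      exact ⟨i, Finset.mem_univ i, rfl⟩
    have h2 : ∑ w ∈ S, Bc w = ((univ : Finset (Fin (m+1))).card : ℝ) := by
      rw [hcard, Nat.cast_sum]
    rw [h2, Finset.card_univ, Fintype.card_fin]
    push_cast; ring
  have hterm : ∀ v ∈ S,
      ((univ.filter (fun a => z a = v)).card) • ((min x' (C v) - min x' (A v)) / Bc v)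
        = min x' ((∑ w ∈ S.filter (· < v), Bc w) + Bc v)
          - min x' (∑ w ∈ S.filter (· < v), Bc w) := by
    intro v hv
    rw [nsmul_eq_mul]
    have hb : ((univ.filter (fun a => z a = v)).card : ℝ) = Bc v := rfl
    rw [hb, mul_div_cancel₀ _ (hBcpos v hv).ne', hCeq v, hAeq v]
  rw [Finset.sum_congr rfl hterm, pit_tele (min x') Bc S, htot, min_eq_right hx', sub_zero]

lemma pit_ofReal_max (r : ℝ) : ENNReal.ofReal (max 0 r) = ENNReal.ofReal r := by
  rcases le_total r 0 with h | h
  · rw [max_eq_left h, ENNReal.ofReal_zero, Eq.comm, ENNReal.ofReal_eq_zero]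
    exact h
  · rw [max_eq_right h]

end PITAux

/-- **Randomized probability integral transform.** For exchangeable real-valued random
variables `Z 0, ..., Z n` (ties allowed) and `τ` uniform on `(0,1)` independent of them,
the randomized PIT `U = (1-τ) F⁻_{n+1}(Z_{n+1}) + τ F_{n+1}(Z_{n+1})` is uniform on `(0,1)`. -/
theorem stmt_1
    {Ω : Type*} [MeasurableSpace Ω] (P : Measure Ω) [IsProbabilityMeasure P]
    (n : ℕ)
    (Z : Fin (n + 1) → Ω → ℝ) (τ : Ω → ℝ)
    (hmeas : ∀ i, Measurable (Z i)) (hτmeas : Measurable τ)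
    (hτ : Measure.map τ P = volume.restrict (Set.Ioo (0 : ℝ) 1))
    (hindep : ProbabilityTheory.IndepFun τ (fun ω => fun i => Z i ω) P)
    (hexch : ∀ σ : Equiv.Perm (Fin (n + 1)),
      Measure.map (fun ω => fun i => Z (σ i) ω) P = Measure.map (fun ω => fun i => Z i ω) P) :
    Measure.map (fun ω =>
        (1 - τ ω) *
          (((univ.filter (fun i : Fin (n + 1) => Z i ω < Z (Fin.last n) ω)).card : ℝ) / (n + 1))
        + τ ω *
          (((univ.filter (fun i : Fin (n + 1) => Z i ω ≤ Z (Fin.last n) ω)).card : ℝ) / (n + 1))) P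
      = volume.restrict (Set.Ioo (0 : ℝ) 1) := by
  classical
  set W : Ω → (Fin (n+1) → ℝ) := fun ω => fun i => Z i ω with hW
  have hWmeas : Measurable W := measurable_pi_lambda _ fun i => hmeas i
  set μ : Measure (Fin (n+1) → ℝ) := Measure.map W P with hμ
  set ν : Measure ℝ := volume.restrict (Set.Ioo (0:ℝ) 1) with hν
  haveI hμprob : IsProbabilityMeasure μ := by
    rw [hμ]; exact Measure.isProbabilityMeasure_map hWmeas.aemeasurable
  haveI hνprob : IsProbabilityMeasure ν := by
    constructor
    rw [hν, Measure.restrict_apply MeasurableSet.univ, Set.univ_inter, Real.volume_Ioo]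
    norm_num
  set g : Fin (n+1) → ℝ × (Fin (n+1) → ℝ) → ℝ := fun j p =>
    (1 - p.1) * (((univ.filter (fun i => p.2 i < p.2 j)).card : ℝ) / (n+1))
      + p.1 * (((univ.filter (fun i => p.2 i ≤ p.2 j)).card : ℝ) / (n+1)) with hg
  have hgmeas : ∀ j, Measurable (g j) := by
    intro j
    apply Measurable.add
    · exact (measurable_const.sub measurable_fst).mul
        (((pit_meas_cardlt j).comp measurable_snd).div_const _)
    · exact measurable_fst.mul (((pit_meas_cardle j).comp measurable_snd).div_const _)
  have hfun : (fun ω =>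
        (1 - τ ω) *
          (((univ.filter (fun i : Fin (n + 1) => Z i ω < Z (Fin.last n) ω)).card : ℝ) / (n + 1))
        + τ ω *
          (((univ.filter (fun i : Fin (n + 1) => Z i ω ≤ Z (Fin.last n) ω)).card : ℝ) / (n + 1)))
      = fun ω => g (Fin.last n) (τ ω, W ω) := rfl
  rw [hfun]
  have hpair : Measurable fun ω => (τ ω, W ω) := hτmeas.prodMk hWmeas
  have hmap : Measure.map (fun ω => (τ ω, W ω)) P = ν.prod μ := by
    rw [hμ, ← hτ]
    exact (ProbabilityTheory.indepFun_iff_map_prod_eq_prod_map_map hτmeas.aemeasurable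
      hWmeas.aemeasurable).mp hindep
  have hmapU : Measure.map (fun ω => g (Fin.last n) (τ ω, W ω)) P
      = Measure.map (g (Fin.last n)) (ν.prod μ) := by
    rw [← hmap, Measure.map_map (hgmeas _) hpair]
    rfl
  rw [hmapU]
  haveI : IsProbabilityMeasure (Measure.map (g (Fin.last n)) (ν.prod μ)) :=
    Measure.isProbabilityMeasure_map (hgmeas _).aemeasurable
  refine Measure.ext_of_Iic _ _ (fun t => ?_)
  have hRHS : ν (Set.Iic t) = ENNReal.ofReal (min t 1) := by
    rw [hν, Measure.restrict_apply measurableSet_Iic, pit_vol_Iic_inter]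
  rw [Measure.map_apply (hgmeas _) measurableSet_Iic, hRHS]
  have hSmeas : ∀ j, MeasurableSet (g j ⁻¹' Set.Iic t) := fun j => (hgmeas j) measurableSet_Iic
  -- exchangeability: pushing μ forward along permutations
  have hμσ : ∀ σ : Equiv.Perm (Fin (n+1)),
      Measure.map (fun z : Fin (n+1) → ℝ => z ∘ σ) μ = μ := by
    intro σ
    have hcomp : Measurable (fun z : Fin (n+1) → ℝ => z ∘ σ) :=
      measurable_pi_lambda _ fun i => measurable_pi_apply (σ i)
    rw [hμ, Measure.map_map hcomp hWmeas]
    exact (hexch σ).trans rfl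
  -- all indices give the same measure
  have hswap : ∀ j : Fin (n+1),
      (ν.prod μ) (g (Fin.last n) ⁻¹' Set.Iic t) = (ν.prod μ) (g j ⁻¹' Set.Iic t) := by
    intro j
    set σ := Equiv.swap j (Fin.last n) with hσ
    have hcomp : Measurable (fun z : Fin (n+1) → ℝ => z ∘ σ) :=
      measurable_pi_lambda _ fun i => measurable_pi_apply (σ i)
    rw [Measure.prod_apply (hSmeas _), Measure.prod_apply (hSmeas _)]
    apply lintegral_congr
    intro s
    have hmset : MeasurableSet {z : Fin (n+1) → ℝ | g j (s, z) ≤ t} := by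
      have hmz : Measurable fun z : Fin (n+1) → ℝ => g j (s, z) :=
        (hgmeas j).comp (measurable_const.prodMk measurable_id)
      exact hmz measurableSet_Iic
    have step1 : Prod.mk s ⁻¹' (g (Fin.last n) ⁻¹' Set.Iic t)
        = (fun z : Fin (n+1) → ℝ => z ∘ σ) ⁻¹' {z | g j (s, z) ≤ t} := by
      ext z
      simp only [Set.mem_preimage, Set.mem_Iic, Set.mem_setOf_eq]
      have hgs : g j (s, z ∘ σ) = g (Fin.last n) (s, z) := by
        have hσj : σ j = Fin.last n := Equiv.swap_apply_left _ _
        simp only [hg, Function.comp, hσj]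
        rw [pit_card_filter_perm σ (fun i => z i < z (Fin.last n)),
          pit_card_filter_perm σ (fun i => z i ≤ z (Fin.last n))]
      rw [hgs]
    rw [step1, ← Measure.map_apply hcomp hmset, hμσ σ]
    rfl
  -- Fubini computation for each index
  have hj : ∀ j : Fin (n+1), (ν.prod μ) (g j ⁻¹' Set.Iic t)
      = ∫⁻ z : Fin (n+1) → ℝ, ENNReal.ofReal
          (min ((t*((n:ℝ)+1) - ((univ.filter (fun i => z i < z j)).card : ℝ))
            / (((univ.filter (fun i => z i ≤ z j)).card : ℝ)
              - ((univ.filter (fun i => z i < z j)).card : ℝ))) 1) ∂μ := by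
    intro j
    rw [Measure.prod_apply_symm (hSmeas j)]
    apply lintegral_congr
    intro z
    set a := ((univ.filter (fun i => z i < z j)).card : ℝ) with ha
    set c := ((univ.filter (fun i => z i ≤ z j)).card : ℝ) with hc
    have hb : 0 < c - a := by
      have h1 := pit_card_split z (z j)
      have h2 := pit_card_eq_pos z j
      rw [← ha, ← hc] at h1
      linarith
    have hm1 : (0:ℝ) < (n:ℝ)+1 := by positivity
    have hset : (fun s => (s, z)) ⁻¹' (g j ⁻¹' Set.Iic t)
        = Set.Iic ((t*((n:ℝ)+1) - a)/(c - a)) := by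
      ext s
      simp only [Set.mem_preimage, Set.mem_Iic, hg]
      have hrw : (1 - s) * (a / ((n:ℝ)+1)) + s * (c / ((n:ℝ)+1))
          = (a + s*(c - a)) / ((n:ℝ)+1) := by
        field_simp; ring
      rw [hrw, div_le_iff₀ hm1, le_div_iff₀ hb]
      constructor <;> intro h <;> nlinarith
    rw [hset, hν, Measure.restrict_apply measurableSet_Iic, pit_vol_Iic_inter]
  -- summing over all indices
  have hsum : ∑ j : Fin (n+1), (ν.prod μ) (g j ⁻¹' Set.Iic t)
      = ENNReal.ofReal (min (max (t*((n:ℝ)+1)) 0) ((n:ℝ)+1)) := by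
    rw [Finset.sum_congr rfl (fun j _ => hj j), ← lintegral_finset_sum]
    · have hpt : ∀ z : Fin (n+1) → ℝ,
          ∑ j : Fin (n+1), ENNReal.ofReal
            (min ((t*((n:ℝ)+1) - ((univ.filter (fun i => z i < z j)).card : ℝ))
              / (((univ.filter (fun i => z i ≤ z j)).card : ℝ)
                - ((univ.filter (fun i => z i < z j)).card : ℝ))) 1)
          = ENNReal.ofReal (min (max (t*((n:ℝ)+1)) 0) ((n:ℝ)+1)) := by
        intro z
        have hterm : ∀ j : Fin (n+1),
            ENNReal.ofReal
              (min ((t*((n:ℝ)+1) - ((univ.filter (fun i => z i < z j)).card : ℝ))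
                / (((univ.filter (fun i => z i ≤ z j)).card : ℝ)
                  - ((univ.filter (fun i => z i < z j)).card : ℝ))) 1)
            = ENNReal.ofReal
              ((min (max (t*((n:ℝ)+1)) 0) ((univ.filter (fun i => z i ≤ z j)).card : ℝ)
                - min (max (t*((n:ℝ)+1)) 0) ((univ.filter (fun i => z i < z j)).card : ℝ))
                / ((univ.filter (fun i => z i = z j)).card : ℝ)) := by
          intro j
          set a := ((univ.filter (fun i => z i < z j)).card : ℝ) with ha
          set c := ((univ.filter (fun i => z i ≤ z j)).card : ℝ) with hc
          set bb := ((univ.filter (fun i => z i = z j)).card : ℝ) with hbb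
          have hsplit : c = a + bb := pit_card_split z (z j)
          have hbpos : 0 < bb := pit_card_eq_pos z j
          have hanon : 0 ≤ a := by rw [ha]; positivity
          rw [← pit_ofReal_max, hsplit, add_sub_cancel_left,
            pit_clamp_eq a bb (t*((n:ℝ)+1)) hanon hbpos]
        rw [Finset.sum_congr rfl (fun j _ => hterm j),
          ← ENNReal.ofReal_sum_of_nonneg, pit_comb z _ (le_max_right _ _)]
        intro j _
        set a := ((univ.filter (fun i => z i < z j)).card : ℝ) with ha
        set c := ((univ.filter (fun i => z i ≤ z j)).card : ℝ) with hc
        set bb := ((univ.filter (fun i => z i = z j)).card : ℝ) with hbb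
        have hsplit : c = a + bb := pit_card_split z (z j)
        have hbpos : 0 < bb := pit_card_eq_pos z j
        have hanon : 0 ≤ a := by rw [ha]; positivity
        rw [hsplit]
        rw [← pit_clamp_eq a bb (t*((n:ℝ)+1)) hanon hbpos]
        exact le_max_left _ _
      rw [lintegral_congr hpt, lintegral_const, measure_univ, mul_one]
    · intro j _
      apply ENNReal.measurable_ofReal.comp
      exact ((measurable_const.sub (pit_meas_cardlt j)).div
        ((pit_meas_cardle j).sub (pit_meas_cardlt j))).min measurable_const
  have hcount : ∑ j : Fin (n+1), (ν.prod μ) (g j ⁻¹' Set.Iic t)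
      = ((n:ℝ≥0∞)+1) * (ν.prod μ) (g (Fin.last n) ⁻¹' Set.Iic t) := by
    rw [Finset.sum_congr rfl (fun j _ => (hswap j).symm), Finset.sum_const, Finset.card_univ,
      Fintype.card_fin, nsmul_eq_mul]
    push_cast
    ring
  have hne : ((n:ℝ≥0∞)+1) ≠ 0 := by simp
  have hnt : ((n:ℝ≥0∞)+1) ≠ ⊤ := by
    exact ENNReal.add_ne_top.mpr ⟨ENNReal.natCast_ne_top n, ENNReal.one_ne_top⟩
  have hkey : ((n:ℝ≥0∞)+1) * (ν.prod μ) (g (Fin.last n) ⁻¹' Set.Iic t)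
      = ((n:ℝ≥0∞)+1) * ENNReal.ofReal (min t 1) := by
    rw [← hcount, hsum]
    have hm1 : (0:ℝ) ≤ (n:ℝ)+1 := by positivity
    have e1 : max (t*((n:ℝ)+1)) 0 = (max t 0) * ((n:ℝ)+1) := by
      rw [max_mul_of_nonneg _ _ hm1, zero_mul]
    have e2 : min ((max t 0) * ((n:ℝ)+1)) ((n:ℝ)+1) = (min (max t 0) 1) * ((n:ℝ)+1) := by
      rw [min_mul_of_nonneg _ _ hm1, one_mul]
    have e3 : ENNReal.ofReal (min (max t 0) 1) = ENNReal.ofReal (min t 1) := by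
      rcases le_total t 0 with h | h
      · rw [max_eq_right h, min_eq_left zero_le_one, ENNReal.ofReal_zero, Eq.comm,
          ENNReal.ofReal_eq_zero]
        exact min_le_of_left_le h
      · rw [max_eq_left h]
    have e4 : ENNReal.ofReal ((n:ℝ)+1) = (n:ℝ≥0∞)+1 := by
      rw [ENNReal.ofReal_add (Nat.cast_nonneg n) zero_le_one, ENNReal.ofReal_natCast,
        ENNReal.ofReal_one]
    rw [e1, e2, ENNReal.ofReal_mul (le_min (le_max_right t 0) zero_le_one), e3, e4, mul_comm]
  exact (ENNReal.mul_right_inj hne hnt).mp hkey
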